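/- Under conditions (I)-(III) (unperturbed eigentriple (λ, h, ν) with ν(h)=1, resolvent R_λ = (R − λI)⁻¹ : D⁰ → B⁰ where R = L − λ(h⊗ν), and perturbed left eigenvector ν(ε) with L(ε)*ν(ε) = λ(ε)ν(ε), ν(ε)(h) ≠ 0), the zeroth-order remainder of κ(ε, ·) := ν(ε, ·)/ν(ε, h) satisfies: for every f ∈ D⁰, κ(ε, f) − ν(f) = κ(ε, T̃₀(ε)(Q(ε)(R_λ f))), where T̃₀(ε) := L(ε) − L and Q(ε) := h ⊗ κ(ε, ·) − I. -/
import Mathlib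


/-- Under conditions (I)-(III), for every f ∈ D⁰,
κ(ε, f) − ν(f) = κ(ε, T̃₀(ε)(Q(ε)(R_λ f))), where κ(ε,f) = ν(ε)(f)/ν(ε)(h),
T̃₀(ε) = L(ε) − L and Q(ε)f = κ(ε,f)h − f. -/
theorem stmt3 {K B : Type*} [RCLike K] [AddCommGroup B] [Module K B]
    (L Leps : B →ₗ[K] B) (lam lamEps : K) (hlam : lam ≠ 0) (h : B) (nu nuEps : B →ₗ[K] K)
    (hLh : L h = lam • h) (hnuL : ∀ f : B, nu (L f) = lam * nu f) (hnuh : nu h = 1)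
    (hnuEpsL : ∀ f : B, nuEps (Leps f) = lamEps * nuEps f) (hne : nuEps h ≠ 0)
    (D : Submodule K B) (Rlam : D → B)
    (hinv : ∀ x : D, L (Rlam x) - lam • (nu (Rlam x) • h) - lam • Rlam x = (x : B)) :
    ∀ f : D, nuEps f / nuEps h - nu f =
      nuEps ((Leps - L) ((nuEps (Rlam f) / nuEps h) • h - Rlam f)) / nuEps h := by
  intro f
  have hf := (hinv f).symm
  rw [hf]
  simp only [LinearMap.sub_apply, map_sub, map_smul, smul_eq_mul, hLh, hnuL, hnuh,
    hnuEpsL]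
  field_simp
  ring
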